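/- Every irreducible (ungraded) representation V of sl₂(F) admits exactly two Z/2Z-gradings making it a graded representation of the graded Lie algebra sl₂ (h of degree 0, e and f of degree 1): in one the highest weight vector lies in V₀ and in the other it lies in V₁. -/

import Mathlib

open LinearMap Module

section

variable {K V : Type*} [Field K] [AddCommGroup V] [Module K V]

/-- A `ℤ/2ℤ`-grading of a representation of `sl₂` (given by operators `E, H, F`)
compatible with the grading of `sl₂` in which `h` has degree `0` and `e, f` degree `1`:
a decomposition `V = V₀ ⊕ V₁` preserved by `H` and swapped by `E` and `F`. -/
def IsSl2Grading (E H F : V →ₗ[K] V) (g : Submodule K V × Submodule K V) : Prop :=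
  IsCompl g.1 g.2 ∧
    (∀ x ∈ g.1, H x ∈ g.1) ∧ (∀ x ∈ g.2, H x ∈ g.2) ∧
    (∀ x ∈ g.1, E x ∈ g.2) ∧ (∀ x ∈ g.2, E x ∈ g.1) ∧
    (∀ x ∈ g.1, F x ∈ g.2) ∧ (∀ x ∈ g.2, F x ∈ g.1)

end



set_option linter.unusedSectionVars false

set_option linter.unusedTactic false

set_option maxHeartbeats 1600000



lemma compl_squeeze {K V : Type*} [Field K] [AddCommGroup V] [Module K V]
    {A B W₁ W₂ : Submodule K V} (hA : A ≤ W₁) (hB : B ≤ W₂)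
    (hsup : A ⊔ B = ⊤) (hinf : W₁ ⊓ W₂ = ⊥) : W₁ = A ∧ W₂ = B := by
  have h1 : W₁ ≤ A := by
    calc W₁ = (A ⊔ B) ⊓ W₁ := by rw [hsup, top_inf_eq]
    _ = A ⊔ (B ⊓ W₁) := sup_inf_assoc_of_le _ hA
    _ ≤ A ⊔ (W₂ ⊓ W₁) := sup_le_sup_left (inf_le_inf_right _ hB) _
    _ = A := by rw [inf_comm, hinf, sup_bot_eq]
  have h2 : W₂ ≤ B := by
    calc W₂ = (B ⊔ A) ⊓ W₂ := by rw [sup_comm, hsup, top_inf_eq]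
    _ = B ⊔ (A ⊓ W₂) := sup_inf_assoc_of_le _ hB
    _ ≤ B ⊔ (W₁ ⊓ W₂) := sup_le_sup_left (inf_le_inf_right _ hA) _
    _ = B := by rw [hinf, sup_bot_eq]
  exact ⟨le_antisymm h1 hA, le_antisymm h2 hB⟩


section Aux

variable {K V : Type*} [Field K] [CharZero K] [AddCommGroup V] [Module K V]

variable {E H F : V →ₗ[K] V}



lemma sl2_kerE_H (hhe : H ∘ₗ E - E ∘ₗ H = (2 : K) • E) {x : V} (hx : E x = 0) :
    E (H x) = 0 := by
  have := LinearMap.ext_iff.1 hhe x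
  simp only [LinearMap.sub_apply, LinearMap.comp_apply, LinearMap.smul_apply, hx, map_zero] at this
  linear_combination (norm := module) -this


lemma sl2_H_powF (hhf : H ∘ₗ F - F ∘ₗ H = (-2 : K) • F) (k : ℕ) (x : V) :
    H ((F ^ k) x) = (F ^ k) (H x) - ((2 * k : K)) • (F ^ k) x := by
  induction k generalizing x with
  | zero => simp
  | succ k ih =>
    have hp : (F ^ (k+1)) = F ∘ₗ (F ^ k) := by rw [pow_succ']; rfl
    have hbase : ∀ y : V, H (F y) = F (H y) - (2 : K) • F y := by
      intro y
      have := LinearMap.ext_iff.1 hhf y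
      simp only [LinearMap.sub_apply, LinearMap.comp_apply, LinearMap.smul_apply] at this
      linear_combination (norm := module) this
    rw [hp]
    simp only [LinearMap.comp_apply]
    rw [hbase ((F ^ k) x), ih x]
    simp only [map_sub, map_smul]
    push_cast
    module


lemma sl2_E_powF (hhf : H ∘ₗ F - F ∘ₗ H = (-2 : K) • F) (hef : E ∘ₗ F - F ∘ₗ E = H)
    (k : ℕ) (x : V) (hx : E x = 0) :
    E ((F ^ (k+1)) x) = ((k+1 : K)) • (F ^ k) (H x) - (((k:K)+1) * k) • (F ^ k) x := by
  have hbase : ∀ y : V, E (F y) = F (E y) + H y := by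
    intro y
    have := LinearMap.ext_iff.1 hef y
    simp only [LinearMap.sub_apply, LinearMap.comp_apply] at this
    linear_combination (norm := module) this
  induction k with
  | zero => simp [hbase, hx]
  | succ k ih =>
    have hp : (F ^ (k+2)) x = F ((F ^ (k+1)) x) := by
      rw [pow_succ']; rfl
    rw [hp, hbase ((F ^ (k+1)) x), ih, sl2_H_powF hhf (k+1) x]
    have hp2 : ∀ y : V, (F ^ (k+1)) y = F ((F ^ k) y) := by
      intro y; rw [pow_succ']; rfl
    rw [hp2 (H x), hp2 x]
    simp only [map_sub, map_add, map_smul]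
    push_cast
    module


lemma sl2_F_nilpotent [FiniteDimensional K V]
    (hhf : H ∘ₗ F - F ∘ₗ H = (-2 : K) • F) : ∃ m : ℕ, (F ^ m : V →ₗ[K] V) = 0 := by
  by_contra! h
  let ad : Module.End K (Module.End K V) := LinearMap.mulLeft K H - LinearMap.mulRight K H
  have heig : ∀ k : ℕ, ad.HasEigenvector (-(2 * k : K)) (F ^ k) := by
    intro k
    constructor
    · rw [Module.End.mem_eigenspace_iff]
      show H * F ^ k - F ^ k * H = _
      ext x
      have := sl2_H_powF hhf k x
      simp only [LinearMap.sub_apply, Module.End.mul_apply, LinearMap.smul_apply]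
      rw [this]
      push_cast
      module
    · exact h k
  have hinj : Function.Injective (fun k : ℕ => -(2 * k : K)) := by
    intro a b hab
    simp only [neg_inj] at hab
    have := mul_left_cancel₀ (two_ne_zero (α := K)) hab
    exact_mod_cast this
  have := ad.eigenvectors_linearIndependent' (fun k : ℕ => -(2 * k : K)) hinj _ heig
  exact Module.Finite.not_linearIndependent_of_infinite _ this


lemma sl2_prod_eigen (H : V →ₗ[K] V) (l : List K) {μ : K} {x : V} (hx : H x = μ • x) :
    ((l.map fun a => H - a • (1 : V →ₗ[K] V)).prod) x = ((l.map fun a => μ - a).prod) • x := by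
  induction l with
  | nil => simp
  | cons a l ih =>
    simp only [List.map_cons, List.prod_cons, Module.End.mul_apply, ih, map_smul,
      LinearMap.sub_apply, LinearMap.smul_apply, Module.End.one_apply, hx]
    rw [smul_sub, smul_smul, smul_smul]
    module

/-- A product of factors `H - aᵢ` preserves an `H`-invariant submodule. -/


lemma sl2_prod_stab (H : V →ₗ[K] V) (l : List K) {W : Submodule K V}
    (hW : ∀ x ∈ W, H x ∈ W) {x : V} (hx : x ∈ W) :
    ((l.map fun a => H - a • (1 : V →ₗ[K] V)).prod) x ∈ W := by
  induction l with
  | nil => simpa using hx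
  | cons a l ih =>
    simp only [List.map_cons, List.prod_cons, Module.End.mul_apply, LinearMap.sub_apply,
      LinearMap.smul_apply, Module.End.one_apply]
    exact W.sub_mem (hW _ ih) (W.smul_mem _ ih)

/-- A product of factors `H - aᵢ` preserves `ker E`. -/


lemma sl2_prod_kerE (hhe : H ∘ₗ E - E ∘ₗ H = (2 : K) • E) (l : List K) {x : V}
    (hx : E x = 0) :
    E (((l.map fun a => H - a • (1 : V →ₗ[K] V)).prod) x) = 0 := by
  induction l with
  | nil => simpa using hx
  | cons a l ih =>
    simp only [List.map_cons, List.prod_cons, Module.End.mul_apply, LinearMap.sub_apply,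
      LinearMap.smul_apply, Module.End.one_apply, map_sub, map_smul, sl2_kerE_H hhe ih, ih,
      smul_zero, sub_zero]

/-- `F`-torsion on a `ker E` vector forces a polynomial equation in `H`. -/


lemma sl2_polyH (hhe : H ∘ₗ E - E ∘ₗ H = (2 : K) • E)
    (hhf : H ∘ₗ F - F ∘ₗ H = (-2 : K) • F) (hef : E ∘ₗ F - F ∘ₗ E = H) :
    ∀ (m : ℕ) (x : V), E x = 0 → (F ^ m) x = 0 →
      (((List.range m).map fun j : ℕ => H - (j : K) • (1 : V →ₗ[K] V)).prod) x = 0 := by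
  intro m
  induction m with
  | zero => intro x _ hx; simpa using hx
  | succ m ih =>
    intro x hEx hFx
    have h1 : E ((F ^ (m+1)) x) = 0 := by rw [hFx, map_zero]
    rw [sl2_E_powF hhf hef m x hEx] at h1
    have h2 : ((m:K)+1) • ((F ^ m) (H x - (m : K) • x)) = 0 := by
      rw [map_sub, map_smul]
      calc ((m:K)+1) • ((F ^ m) (H x) - (m:K) • (F ^ m) x)
          = ((m+1 : K)) • (F ^ m) (H x) - (((m:K)+1) * m) • (F ^ m) x := by
            push_cast; module
        _ = 0 := h1
    have h3 : (F ^ m) (H x - (m : K) • x) = 0 := by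
      have hne : ((m:K)+1) ≠ 0 := by
        have : ((m+1 : ℕ) : K) ≠ 0 := Nat.cast_ne_zero.2 (Nat.succ_ne_zero m)
        push_cast at this; exact this
      exact (smul_eq_zero.1 h2).resolve_left hne
    have h4 : E (H x - (m : K) • x) = 0 := by
      rw [map_sub, map_smul, sl2_kerE_H hhe hEx, hEx, smul_zero, sub_zero]
    have h5 := ih _ h4 h3
    rw [List.range_succ, List.map_append, List.prod_append]
    simp only [List.map_cons, List.map_nil, List.prod_cons, List.prod_nil, mul_one,
      Module.End.mul_apply, LinearMap.sub_apply, LinearMap.smul_apply, Module.End.one_apply]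
    exact h5

/-- Extraction of an eigenvector of `H` inside `ker E` from a product relation. -/


lemma sl2_extract (hhe : H ∘ₗ E - E ∘ₗ H = (2 : K) • E) :
    ∀ (l : List K) (x : V), E x = 0 → x ≠ 0 →
      ((l.map fun a => H - a • (1 : V →ₗ[K] V)).prod) x = 0 →
      ∃ a ∈ l, ∃ w : V, w ≠ 0 ∧ E w = 0 ∧ H w = a • w := by
  intro l
  induction l with
  | nil => intro x hE hx h; simp at h; exact absurd h hx
  | cons a l ih =>
    intro x hE hx h
    simp only [List.map_cons, List.prod_cons, Module.End.mul_apply] at h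
    by_cases hy : ((l.map fun a => H - a • (1 : V →ₗ[K] V)).prod) x = 0
    · obtain ⟨b, hb, w, hw⟩ := ih x hE hx hy
      exact ⟨b, List.mem_cons_of_mem a hb, w, hw⟩
    · refine ⟨a, List.mem_cons_self, _, hy, sl2_prod_kerE hhe l hE, ?_⟩
      rw [LinearMap.sub_apply, LinearMap.smul_apply, Module.End.one_apply, sub_eq_zero] at h
      exact h


lemma sl2_weight_nat [FiniteDimensional K V]
    (hhf : H ∘ₗ F - F ∘ₗ H = (-2 : K) • F) (hef : E ∘ₗ F - F ∘ₗ E = H)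
    {w : V} {μ : K} (hw : w ≠ 0) (hEw : E w = 0) (hHw : H w = μ • w) :
    ∃ n : ℕ, μ = n := by
  obtain ⟨m, hm⟩ := sl2_F_nilpotent hhf
  have hex : ∃ k, (F ^ k) w = 0 := ⟨m, by rw [hm]; rfl⟩
  classical
  let m₀ := Nat.find hex
  have hm₀ : (F ^ m₀) w = 0 := Nat.find_spec hex
  have hm₀ne : m₀ ≠ 0 := by
    intro h0
    apply hw
    have := hm₀
    rw [h0] at this
    simpa using this
  obtain ⟨k, hk⟩ : ∃ k, m₀ = k + 1 := ⟨m₀ - 1, by omega⟩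
  have hkne : (F ^ k) w ≠ 0 := Nat.find_min hex (by omega)
  have h1 : E ((F ^ (k+1)) w) = 0 := by rw [← hk, hm₀, map_zero]
  rw [sl2_E_powF hhf hef k w hEw, hHw, map_smul] at h1
  have h2 : (((k:K)+1) * (μ - k)) • ((F ^ k) w) = 0 := by
    rw [← h1]; module
  have h3 : ((k:K)+1) * (μ - k) = 0 := by
    by_contra hne
    exact hkne ((smul_eq_zero.1 h2).resolve_left hne)
  have hkK : ((k:K)+1) ≠ 0 := by
    have : ((k+1 : ℕ) : K) ≠ 0 := Nat.cast_ne_zero.2 (Nat.succ_ne_zero k)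
    push_cast at this; exact this
  refine ⟨k, ?_⟩
  have := sub_eq_zero.1 ((mul_eq_zero.1 h3).resolve_left hkK)
  exact this


end Aux



/-- Every irreducible representation `V` of `sl₂` admits exactly two `ℤ/2ℤ`-gradings
making it a graded representation: in one the highest weight vector lies in `V₀`
and in the other it lies in `V₁`. -/
theorem two_gradings {K V : Type*} [Field K] [CharZero K] [AddCommGroup V] [Module K V]
    [FiniteDimensional K V] [Nontrivial V]
    (E H F : V →ₗ[K] V)
    (hhe : H ∘ₗ E - E ∘ₗ H = (2 : K) • E)
    (hhf : H ∘ₗ F - F ∘ₗ H = (-2 : K) • F)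
    (hef : E ∘ₗ F - F ∘ₗ E = H)
    (hirr : ∀ W : Submodule K V, (∀ x ∈ W, E x ∈ W) → (∀ x ∈ W, H x ∈ W) →
      (∀ x ∈ W, F x ∈ W) → W = ⊥ ∨ W = ⊤)
    (v : V) (hv : v ≠ 0) (hEv : E v = 0) :
    ∃ g₁ g₂ : Submodule K V × Submodule K V,
      IsSl2Grading E H F g₁ ∧ IsSl2Grading E H F g₂ ∧ g₁ ≠ g₂ ∧
      v ∈ g₁.1 ∧ v ∈ g₂.2 ∧
      ∀ g, IsSl2Grading E H F g → g = g₁ ∨ g = g₂ := by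
  classical
  -- Step 1: find a primitive vector `w` with natural weight `n`
  obtain ⟨m, hm⟩ := sl2_F_nilpotent hhf
  have hpoly := sl2_polyH hhe hhf hef m v hEv (by rw [hm]; rfl)
  have hlist : ((((List.range m).map (Nat.cast : ℕ → K)).map
      fun a => H - a • (1 : V →ₗ[K] V)).prod) v = 0 := by
    rw [List.map_map]; exact hpoly
  obtain ⟨a, ha, w, hw0, hEw, hHw⟩ := sl2_extract hhe _ v hEv hv hlist
  obtain ⟨n, rfl⟩ : ∃ n : ℕ, a = n := by
    obtain ⟨j, _, rfl⟩ := List.mem_map.1 ha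
    exact ⟨j, rfl⟩
  clear ha hpoly hlist hm m
  -- Step 2: structure of the string `F^k w`
  have hψH : ∀ k : ℕ, H ((F ^ k) w) = ((n:K) - 2*k) • (F ^ k) w := by
    intro k
    rw [sl2_H_powF hhf k w, hHw, map_smul]
    module
  have hψE : ∀ k : ℕ, E ((F ^ (k+1)) w) = (((k:K)+1) * ((n:K) - k)) • (F ^ k) w := by
    intro k
    rw [sl2_E_powF hhf hef k w hEw, hHw, map_smul]
    module
  have hcast_ne : ∀ {p q : ℕ}, q < p → ((p:K) - q) ≠ 0 := by
    intro p q h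
    have h2 : ((p - q : ℕ) : K) = (p:K) - q := Nat.cast_sub h.le
    rw [← h2, Nat.cast_ne_zero]
    omega
  have hsucc_ne : ∀ k : ℕ, ((k:K)+1) ≠ 0 := by
    intro k
    have : ((k+1 : ℕ) : K) ≠ 0 := Nat.cast_ne_zero.2 (Nat.succ_ne_zero k)
    push_cast at this; exact this
  have hψne : ∀ k : ℕ, k ≤ n → (F ^ k) w ≠ 0 := by
    intro k
    induction k with
    | zero => intro _ h; exact hw0 (by simpa using h)
    | succ k ih =>
      intro hk h
      have h1 : (((k:K)+1) * ((n:K) - k)) • (F ^ k) w = 0 := by rw [← hψE k, h, map_zero]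
      have h2 : (((k:K)+1) * ((n:K) - k)) ≠ 0 :=
        mul_ne_zero (hsucc_ne k) (hcast_ne (by omega))
      exact ih (by omega) ((smul_eq_zero.1 h1).resolve_left h2)
  have hψtop : (F ^ (n+1)) w = 0 := by
    by_contra hne
    have hE' : E ((F ^ (n+1)) w) = 0 := by
      rw [hψE n, sub_self, mul_zero, zero_smul]
    obtain ⟨n', hn'⟩ := sl2_weight_nat hhf hef hne hE' (hψH (n+1))
    have hc : ((n' + 2*(n+1) : ℕ) : K) = ((n:ℕ) : K) := by push_cast at hn' ⊢; linear_combination -hn'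
    have := Nat.cast_inj (R := K) |>.1 hc
    omega
  have hψgt : ∀ k : ℕ, n < k → (F ^ k) w = 0 := by
    intro k hk
    obtain ⟨t, rfl⟩ : ∃ t, k = t + (n+1) := ⟨k - (n+1), by omega⟩
    rw [pow_add, Module.End.mul_apply, hψtop, map_zero]
  -- Step 3: linear independence
  set bF : Fin (n+1) → V := fun i => (F ^ (i:ℕ)) w with hbF
  have hinj : Function.Injective (fun i : Fin (n+1) => (n:K) - 2*((i:ℕ):K)) := by
    intro i j hij
    have hij' : (n:K) - 2*((i:ℕ):K) = (n:K) - 2*((j:ℕ):K) := hij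
    have h1 : ((i:ℕ):K) = ((j:ℕ):K) := by linear_combination (-1/2 : K) * hij'
    exact Fin.ext (Nat.cast_inj.1 h1)
  have hind : LinearIndependent K bF :=
    Module.End.eigenvectors_linearIndependent' H (fun i : Fin (n+1) => (n:K) - 2*((i:ℕ):K))
      hinj bF (fun i => ⟨Module.End.mem_eigenspace_iff.2 (hψH i), hψne i i.is_le⟩)
  -- Step 4: even and odd parts
  set Sev : Set (Fin (n+1)) := {i | Even (i:ℕ)} with hSev
  set Vev := Submodule.span K (bF '' Sev) with hVev
  set Vod := Submodule.span K (bF '' Sevᶜ) with hVod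
  have hdisj : Disjoint Vev Vod := hind.disjoint_span_image disjoint_compl_right
  have hmemEv : ∀ k : ℕ, Even k → (F ^ k) w ∈ Vev := by
    intro k hk
    by_cases hkn : k ≤ n
    · exact Submodule.subset_span ⟨⟨k, by omega⟩, hk, rfl⟩
    · rw [hψgt k (by omega)]; exact Submodule.zero_mem _
  have hmemOd : ∀ k : ℕ, ¬ Even k → (F ^ k) w ∈ Vod := by
    intro k hk
    by_cases hkn : k ≤ n
    · exact Submodule.subset_span ⟨⟨k, by omega⟩, hk, rfl⟩
    · rw [hψgt k (by omega)]; exact Submodule.zero_mem _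
  -- Step 5: invariance properties
  have stab : ∀ (S : Set (Fin (n+1))) (T : Submodule K V) (G : V →ₗ[K] V),
      (∀ i ∈ S, G (bF i) ∈ T) → ∀ x ∈ Submodule.span K (bF '' S), G x ∈ T := by
    intro S T G hgen x hx
    have hle : Submodule.span K (bF '' S) ≤ T.comap G := by
      rw [Submodule.span_le]
      rintro _ ⟨i, hi, rfl⟩
      exact hgen i hi
    exact hle hx
  have hpow : ∀ (k : ℕ) (y : V), (F ^ (k+1)) y = F ((F ^ k) y) := by
    intro k y; rw [pow_succ']; rfl
  have hHev : ∀ x ∈ Vev, H x ∈ Vev := by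
    refine stab Sev Vev H (fun i hi => ?_)
    rw [hbF]
    rw [hψH (i:ℕ)]
    exact Submodule.smul_mem _ _ (Submodule.subset_span ⟨i, hi, rfl⟩)
  have hHod : ∀ x ∈ Vod, H x ∈ Vod := by
    refine stab Sevᶜ Vod H (fun i hi => ?_)
    rw [hbF, hψH (i:ℕ)]
    exact Submodule.smul_mem _ _ (Submodule.subset_span ⟨i, hi, rfl⟩)
  have hEmem : ∀ k : ℕ, (Even k → E ((F ^ k) w) ∈ Vod) ∧ (¬ Even k → E ((F ^ k) w) ∈ Vev) := by
    intro k
    cases k with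
    | zero =>
      constructor
      · intro _; simpa [hEw] using (Submodule.zero_mem Vod)
      · intro h; exact absurd Even.zero h
    | succ k =>
      constructor
      · intro hk
        rw [hψE k]
        exact Submodule.smul_mem _ _ (hmemOd k (Nat.even_add_one.mp hk))
      · intro hk
        rw [hψE k]
        exact Submodule.smul_mem _ _ (hmemEv k (by rw [Nat.even_add_one] at hk; exact not_not.1 hk))
  have hEev : ∀ x ∈ Vev, E x ∈ Vod := stab Sev Vod E (fun i hi => (hEmem (i:ℕ)).1 hi)
  have hEod : ∀ x ∈ Vod, E x ∈ Vev := stab Sevᶜ Vev E (fun i hi => (hEmem (i:ℕ)).2 hi)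
  have hFmem : ∀ k : ℕ, (Even k → F ((F ^ k) w) ∈ Vod) ∧ (¬ Even k → F ((F ^ k) w) ∈ Vev) := by
    intro k
    rw [← hpow k w]
    constructor
    · intro hk
      exact hmemOd (k+1) (fun h => (Nat.even_add_one.mp h) hk)
    · intro hk
      exact hmemEv (k+1) (Nat.even_add_one.mpr hk)
  have hFev : ∀ x ∈ Vev, F x ∈ Vod := stab Sev Vod F (fun i hi => (hFmem (i:ℕ)).1 hi)
  have hFod : ∀ x ∈ Vod, F x ∈ Vev := stab Sevᶜ Vev F (fun i hi => (hFmem (i:ℕ)).2 hi)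
  -- Step 6: the sum is everything
  have hwVev : w ∈ Vev := by
    have := hmemEv 0 Even.zero
    simpa using this
  have hsup : Vev ⊔ Vod = ⊤ := by
    have hcl : ∀ (G : V →ₗ[K] V), (∀ x ∈ Vev, G x ∈ Vev ⊔ Vod) → (∀ x ∈ Vod, G x ∈ Vev ⊔ Vod) →
        ∀ x ∈ Vev ⊔ Vod, G x ∈ Vev ⊔ Vod := by
      intro G h1 h2 x hx
      rcases Submodule.mem_sup.1 hx with ⟨y, hy, z, hz, rfl⟩
      rw [map_add]
      exact Submodule.add_mem _ (h1 y hy) (h2 z hz)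
    rcases hirr (Vev ⊔ Vod)
      (hcl E (fun x hx => Submodule.mem_sup_right (hEev x hx)) (fun x hx => Submodule.mem_sup_left (hEod x hx)))
      (hcl H (fun x hx => Submodule.mem_sup_left (hHev x hx)) (fun x hx => Submodule.mem_sup_right (hHod x hx)))
      (hcl F (fun x hx => Submodule.mem_sup_right (hFev x hx)) (fun x hx => Submodule.mem_sup_left (hFod x hx)))
      with h | h
    · exfalso
      have : w ∈ (⊥ : Submodule K V) := h ▸ (Submodule.mem_sup_left hwVev : w ∈ Vev ⊔ Vod)
      exact hw0 (Submodule.mem_bot K |>.1 this)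
    · exact h
  have hcompl : IsCompl Vev Vod := ⟨hdisj, codisjoint_iff.2 hsup⟩
  have htop : Submodule.span K (Set.range bF) = ⊤ := by
    refine le_antisymm le_top ?_
    rw [← hsup]
    refine sup_le (Submodule.span_mono ?_) (Submodule.span_mono ?_) <;>
      exact Set.image_subset_range _ _
  have hwnVod : w ∉ Vod := fun hmem => hw0 (Submodule.disjoint_def.1 hdisj w hwVev hmem)
  -- v lies in the even part
  have hvVev : v ∈ Vev := by
    have hv_span : v ∈ Submodule.span K (Set.range bF) := by rw [htop]; exact Submodule.mem_top
    obtain ⟨c, hc⟩ := (Submodule.mem_span_range_iff_exists_fun K).1 hv_span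
    set c' : ℕ → K := fun k => if h : k < n+1 then c ⟨k, h⟩ else 0 with hc'
    have hsum : ∑ k ∈ Finset.range (n+1), c' k • (F ^ k) w = v := by
      rw [← hc, ← Fin.sum_univ_eq_sum_range (fun k => c' k • (F ^ k) w) (n+1)]
      refine Finset.sum_congr rfl (fun i _ => ?_)
      simp only [hc', hbF]
      rw [dif_pos i.isLt]
    have hEsum : ∑ k ∈ Finset.range (n+1), c' k • E ((F ^ k) w) = 0 := by
      have : E (∑ k ∈ Finset.range (n+1), c' k • (F ^ k) w) = 0 := by rw [hsum]; exact hEv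
      rw [map_sum] at this
      simpa only [map_smul] using this
    have hEsum2 : ∑ k ∈ Finset.range n, (c' (k+1) * (((k:K)+1) * ((n:K) - k))) • (F ^ k) w = 0 := by
      rw [Finset.sum_range_succ'] at hEsum
      simp only [pow_zero, Module.End.one_apply, hEw, smul_zero, add_zero] at hEsum
      rw [← hEsum]
      refine Finset.sum_congr rfl (fun k _ => ?_)
      rw [hψE k, smul_smul]
    set d : ℕ → K := fun k => if k < n then c' (k+1) * (((k:K)+1) * ((n:K) - k)) else 0 with hd
    have e1 : ∑ k ∈ Finset.range (n+1), d k • (F ^ k) w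
        = ∑ k ∈ Finset.range n, d k • (F ^ k) w :=
      (Finset.sum_subset (Finset.range_subset_range.2 (Nat.le_succ n)) (fun x _ hx => by
        simp only [hd]
        rw [if_neg (by simpa using hx)]
        exact zero_smul _ _)).symm
    have e2 : ∑ k ∈ Finset.range n, d k • (F ^ k) w = 0 := by
      rw [← hEsum2]
      refine Finset.sum_congr rfl (fun k hk => ?_)
      simp only [hd]
      rw [if_pos (Finset.mem_range.1 hk)]
    have hsum3 : ∑ i : Fin (n+1), d (i:ℕ) • bF i = 0 := by
      simp only [hbF]
      rw [Fin.sum_univ_eq_sum_range (fun k => d k • (F ^ k) w) (n+1), e1, e2]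
    have hd0 := Fintype.linearIndependent_iff.1 hind (fun i => d (i:ℕ)) hsum3
    have hc'0 : ∀ k, k < n → c' (k+1) = 0 := by
      intro k hk
      have hk0 := hd0 ⟨k, by omega⟩
      simp only [hd] at hk0
      rw [if_pos hk] at hk0
      rcases mul_eq_zero.1 hk0 with h | h
      · exact h
      · exact absurd h (mul_ne_zero (hsucc_ne k) (hcast_ne hk))
    have hvw : v = c' 0 • w := by
      rw [← hsum, Finset.sum_range_succ']
      simp only [pow_zero, Module.End.one_apply]
      rw [Finset.sum_eq_zero (fun k hk => by rw [hc'0 k (Finset.mem_range.1 hk), zero_smul]),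
        zero_add]
    rw [hvw]
    exact Submodule.smul_mem _ _ hwVev
  refine ⟨(Vev, Vod), (Vod, Vev),
    ⟨hcompl, hHev, hHod, hEev, hEod, hFev, hFod⟩,
    ⟨hcompl.symm, hHod, hHev, hEod, hEev, hFod, hFev⟩, ?_, hvVev, hvVev, ?_⟩
  · intro hcontra
    have : Vev = Vod := congrArg Prod.fst hcontra
    exact hwnVod (this ▸ hwVev)
  · -- uniqueness
    intro g hg
    obtain ⟨⟨gdis, gcodis⟩, gH1, gH2, gE1, gE2, gF1, gF2⟩ := hg
    have ginf : g.1 ⊓ g.2 = ⊥ := disjoint_iff.1 gdis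
    have gsup : g.1 ⊔ g.2 = ⊤ := codisjoint_iff.1 gcodis
    set plist : List K := (List.range n).map (fun i : ℕ => (n:K) - 2*((i:K)+1)) with hplist
    set Pop : V →ₗ[K] V := ((plist.map fun a => H - a • (1 : V →ₗ[K] V)).prod) with hPop
    set c₀ : K := (plist.map fun a => (n:K) - a).prod with hc₀
    have hPw : Pop w = c₀ • w := sl2_prod_eigen H plist hHw
    have hc₀ne : c₀ ≠ 0 := by
      rw [hc₀]
      refine List.prod_ne_zero (fun h0 => ?_)
      rw [hplist, List.map_map, List.mem_map] at h0
      obtain ⟨i, _, hi⟩ := h0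
      simp only [Function.comp_apply] at hi
      have h2 : (2:K) * ((i:K)+1) = 0 := by linear_combination hi
      exact mul_ne_zero two_ne_zero (hsucc_ne i) h2
    have hPk : ∀ k : ℕ, 1 ≤ k → k ≤ n → Pop ((F ^ k) w) = 0 := by
      intro k h1 h2
      rw [hPop, sl2_prod_eigen H plist (hψH k)]
      have hmem : (0:K) ∈ (plist.map fun a => ((n:K) - 2*(k:K)) - a) := by
        rw [hplist, List.map_map, List.mem_map]
        refine ⟨k-1, List.mem_range.2 (by omega), ?_⟩
        simp only [Function.comp_apply]
        rw [Nat.cast_sub h1]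
        ring
      rw [List.prod_eq_zero hmem, zero_smul]
    have hPrange : ∀ x : V, Pop x ∈ Submodule.span K {w} := by
      intro x
      have hx : x ∈ Submodule.span K (Set.range bF) := by rw [htop]; trivial
      refine Submodule.span_induction ?_ ?_ ?_ ?_ hx
      · rintro _ ⟨i, rfl⟩
        rcases Nat.eq_zero_or_pos (i:ℕ) with h0 | h0
        · have hbi : bF i = w := by simp [hbF, h0]
          rw [hbi, hPw]
          exact Submodule.smul_mem _ _ (Submodule.mem_span_singleton_self w)
        · have : Pop (bF i) = 0 := hPk (i:ℕ) h0 i.is_le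
          rw [this]
          exact Submodule.zero_mem _
      · rw [map_zero]; exact Submodule.zero_mem _
      · intro x y _ _ hx hy
        rw [map_add]; exact Submodule.add_mem _ hx hy
      · intro a x _ hx
        rw [map_smul]; exact Submodule.smul_mem _ _ hx
    have hPg : ∀ (W : Submodule K V), (∀ x ∈ W, H x ∈ W) → ∀ x ∈ W, Pop x ∈ W :=
      fun W hW x hx => sl2_prod_stab H plist hW hx
    have hwsup : w ∈ g.1 ⊔ g.2 := by rw [gsup]; trivial
    obtain ⟨x₀, hx₀, x₁, hx₁, hxsum⟩ := Submodule.mem_sup.1 hwsup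
    obtain ⟨a₀, ha₀⟩ := Submodule.mem_span_singleton.1 (hPrange x₀)
    obtain ⟨a₁, ha₁⟩ := Submodule.mem_span_singleton.1 (hPrange x₁)
    have hsum2 : a₀ • w + a₁ • w = c₀ • w := by
      rw [ha₀, ha₁, ← map_add, hxsum, hPw]
    have hane : a₀ ≠ 0 ∨ a₁ ≠ 0 := by
      by_contra hcon
      push_neg at hcon
      rw [hcon.1, hcon.2, zero_smul, zero_add] at hsum2
      exact hw0 ((smul_eq_zero.1 hsum2.symm).resolve_left hc₀ne)
    have hwg : w ∈ g.1 ∨ w ∈ g.2 := by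
      rcases hane with h | h
      · left
        have h1 : Pop x₀ ∈ g.1 := hPg g.1 gH1 x₀ hx₀
        rw [← ha₀] at h1
        have h2 := Submodule.smul_mem g.1 a₀⁻¹ h1
        rwa [inv_smul_smul₀ h] at h2
      · right
        have h1 : Pop x₁ ∈ g.2 := hPg g.2 gH2 x₁ hx₁
        rw [← ha₁] at h1
        have h2 := Submodule.smul_mem g.2 a₁⁻¹ h1
        rwa [inv_smul_smul₀ h] at h2
    rcases hwg with hwg | hwg
    · left
      have hpar : ∀ k : ℕ, (Even k → (F ^ k) w ∈ g.1) ∧ (¬ Even k → (F ^ k) w ∈ g.2) := by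
        intro k
        induction k with
        | zero => exact ⟨fun _ => by simpa using hwg, fun h => absurd Even.zero h⟩
        | succ k ih =>
          constructor
          · intro hk
            rw [hpow k w]
            exact gF2 _ (ih.2 (Nat.even_add_one.mp hk))
          · intro hk
            rw [hpow k w]
            exact gF1 _ (ih.1 (by rw [Nat.even_add_one] at hk; exact not_not.1 hk))
      have hVevle : Vev ≤ g.1 := by
        rw [hVev, Submodule.span_le]
        rintro _ ⟨i, hi, rfl⟩
        exact (hpar (i:ℕ)).1 hi
      have hVodle : Vod ≤ g.2 := by
        rw [hVod, Submodule.span_le]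
        rintro _ ⟨i, hi, rfl⟩
        exact (hpar (i:ℕ)).2 hi
      obtain ⟨hg1, hg2⟩ := compl_squeeze hVevle hVodle hsup ginf
      exact Prod.ext hg1 hg2
    · right
      have hpar : ∀ k : ℕ, (Even k → (F ^ k) w ∈ g.2) ∧ (¬ Even k → (F ^ k) w ∈ g.1) := by
        intro k
        induction k with
        | zero => exact ⟨fun _ => by simpa using hwg, fun h => absurd Even.zero h⟩
        | succ k ih =>
          constructor
          · intro hk
            rw [hpow k w]
            exact gF1 _ (ih.2 (Nat.even_add_one.mp hk))
          · intro hk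
            rw [hpow k w]
            exact gF2 _ (ih.1 (by rw [Nat.even_add_one] at hk; exact not_not.1 hk))
      have hVodle : Vod ≤ g.1 := by
        rw [hVod, Submodule.span_le]
        rintro _ ⟨i, hi, rfl⟩
        exact (hpar (i:ℕ)).2 hi
      have hVevle : Vev ≤ g.2 := by
        rw [hVev, Submodule.span_le]
        rintro _ ⟨i, hi, rfl⟩
        exact (hpar (i:ℕ)).1 hi
      obtain ⟨hg1, hg2⟩ := compl_squeeze hVodle hVevle (by rw [sup_comm]; exact hsup) ginf
      exact Prod.ext hg1 hg2
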